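/- Let A and B be m × n real matrices with unit ℓ₂-norm columns satisfying the restricted isometry property of order k with constants δ_k(A), δ_k(B) ∈ (0,1), and let δ = max(δ_k(A), δ_k(B)). Then the columnwise Khatri-Rao product A ⊙ B satisfies the restricted isometry property of order k with constant at most δ², i.e., for every k-sparse z ∈ ℝⁿ, (1 − δ²)‖z‖₂² ≤ ‖(A ⊙ B)z‖₂² ≤ (1 + δ²)‖z‖₂². -/

import Mathlib

open Matrix
open scoped Classical

/-- Columnwise Khatri-Rao product of two `m × n` matrices. -/
def khatriRao {m n : ℕ} (A B : Matrix (Fin m) (Fin n) ℝ) :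
    Matrix (Fin m × Fin m) (Fin n) ℝ :=
  fun p j => A p.1 j * B p.2 j

/-- `z` has at most `k` nonzero entries. -/
def IsSparse {n : ℕ} (k : ℕ) (z : Fin n → ℝ) : Prop :=
  (Finset.univ.filter fun i => z i ≠ 0).card ≤ k

/-- `Φ` satisfies the RIP of order `k` with constant `δ`. -/
def SatisfiesRIP {ι : Type*} [Fintype ι] {n : ℕ} (Φ : Matrix ι (Fin n) ℝ)
    (k : ℕ) (δ : ℝ) : Prop :=
  ∀ z : Fin n → ℝ, IsSparse k z →
    (1 - δ) * ∑ i, (z i) ^ 2 ≤ ∑ p, (Φ.mulVec z p) ^ 2 ∧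
    ∑ p, (Φ.mulVec z p) ^ 2 ≤ (1 + δ) * ∑ i, (z i) ^ 2

/-- Quadratic form expansion of `‖Φ z‖²` in terms of the Gram matrix. -/
lemma sum_mulVec_sq {ι : Type*} [Fintype ι] {n : ℕ} (Φ : Matrix ι (Fin n) ℝ)
    (z : Fin n → ℝ) :
    ∑ p, (Φ.mulVec z p) ^ 2 = ∑ i, ∑ j, z i * z j * ∑ p, Φ p i * Φ p j := by
  have h1 : ∀ p, (Φ.mulVec z p) ^ 2 = ∑ i, ∑ j, (Φ p i * z i) * (Φ p j * z j) := by
    intro p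
    rw [sq]
    simp [Matrix.mulVec, dotProduct, Finset.sum_mul_sum]
  calc ∑ p, (Φ.mulVec z p) ^ 2
      = ∑ p, ∑ i, ∑ j, (Φ p i * z i) * (Φ p j * z j) :=
        Finset.sum_congr rfl fun p _ => h1 p
    _ = ∑ i, ∑ p, ∑ j, (Φ p i * z i) * (Φ p j * z j) := Finset.sum_comm
    _ = ∑ i, ∑ j, ∑ p, (Φ p i * z i) * (Φ p j * z j) :=
        Finset.sum_congr rfl fun i _ => Finset.sum_comm
    _ = ∑ i, ∑ j, z i * z j * ∑ p, Φ p i * Φ p j := by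
        refine Finset.sum_congr rfl fun i _ => Finset.sum_congr rfl fun j _ => ?_
        rw [Finset.mul_sum]
        exact Finset.sum_congr rfl fun p _ => by ring

lemma diag_form {n : ℕ} (c : ℝ) (x : Fin n → ℝ) :
    ∑ i, ∑ j, x i * x j * (if i = j then c else 0) = c * ∑ i, (x i) ^ 2 := by
  rw [Finset.mul_sum]
  refine Finset.sum_congr rfl fun i _ => ?_
  rw [Finset.sum_eq_single i (fun j _ hj => by simp [Ne.symm hj]) (by simp)]
  simp [sq]; ring

lemma form_dotProduct {n : ℕ} (P : Matrix (Fin n) (Fin n) ℝ) (x : Fin n → ℝ) :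
    dotProduct x (P.mulVec x) = ∑ i, ∑ j, x i * x j * P i j := by
  simp only [dotProduct, Matrix.mulVec, Finset.mul_sum]
  exact Finset.sum_congr rfl fun i _ => Finset.sum_congr rfl fun j _ => by ring

/-- Schur product theorem, quadratic-form version. -/
lemma schur_form {n : ℕ} (P Q : Matrix (Fin n) (Fin n) ℝ) (hP : P.PosSemidef)
    (hQ : ∀ x : Fin n → ℝ, 0 ≤ ∑ i, ∑ j, x i * x j * Q i j) (x : Fin n → ℝ) :
    0 ≤ ∑ i, ∑ j, x i * x j * (P i j * Q i j) := by
  obtain ⟨r, v, hv⟩ := Matrix.posSemidef_iff_eq_sum_vecMulVec.mp hP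
  obtain ⟨C, hC⟩ : ∃ C : Matrix (Fin r) (Fin n) ℝ, P = Cᴴ * C :=
    ⟨Matrix.of fun p i => v p i, by
      ext i j; rw [hv]; simp [Matrix.sum_apply, Matrix.vecMulVec_apply, Matrix.mul_apply]⟩
  have hPij : ∀ i j, P i j = ∑ p, C p i * C p j := by
    intro i j
    rw [hC]
    simp [Matrix.mul_apply, Matrix.conjTranspose_apply]
  have key : ∑ i, ∑ j, x i * x j * (P i j * Q i j)
      = ∑ p, ∑ i, ∑ j, (x i * C p i) * (x j * C p j) * Q i j := by
    calc ∑ i, ∑ j, x i * x j * (P i j * Q i j)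
        = ∑ i, ∑ j, ∑ p, (x i * C p i) * (x j * C p j) * Q i j := by
          refine Finset.sum_congr rfl fun i _ => Finset.sum_congr rfl fun j _ => ?_
          rw [hPij i j, Finset.sum_mul, Finset.mul_sum]
          exact Finset.sum_congr rfl fun p _ => by ring
      _ = ∑ i, ∑ p, ∑ j, (x i * C p i) * (x j * C p j) * Q i j :=
          Finset.sum_congr rfl fun i _ => Finset.sum_comm
      _ = ∑ p, ∑ i, ∑ j, (x i * C p i) * (x j * C p j) * Q i j := Finset.sum_comm
  rw [key]
  exact Finset.sum_nonneg fun p _ => hQ fun i => x i * C p i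

/-- Key bound: Hadamard product of two "small" symmetric hollow matrices. -/
lemma hadamard_form_bound {n : ℕ} (M N : Matrix (Fin n) (Fin n) ℝ) (δ : ℝ) (hδ : 0 ≤ δ)
    (hMsym : ∀ i j, M i j = M j i)
    (hMdiag : ∀ i, M i i = 0) (hNdiag : ∀ i, N i i = 0)
    (hM : ∀ x : Fin n → ℝ, |∑ i, ∑ j, x i * x j * M i j| ≤ δ * ∑ i, (x i) ^ 2)
    (hN : ∀ x : Fin n → ℝ, |∑ i, ∑ j, x i * x j * N i j| ≤ δ * ∑ i, (x i) ^ 2)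
    (x : Fin n → ℝ) :
    |∑ i, ∑ j, x i * x j * (M i j * N i j)| ≤ δ ^ 2 * ∑ i, (x i) ^ 2 := by
  set P : Matrix (Fin n) (Fin n) ℝ := fun i j => (if i = j then δ else 0) - M i j with hPdef
  have hsq : ∀ y : Fin n → ℝ, 0 ≤ ∑ i, (y i) ^ 2 :=
    fun y => Finset.sum_nonneg fun i _ => sq_nonneg _
  have hPform : ∀ y : Fin n → ℝ,
      ∑ i, ∑ j, y i * y j * P i j = δ * ∑ i, (y i) ^ 2 - ∑ i, ∑ j, y i * y j * M i j := by
    intro y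
    rw [← diag_form δ y, ← Finset.sum_sub_distrib]
    refine Finset.sum_congr rfl fun i _ => ?_
    rw [← Finset.sum_sub_distrib]
    exact Finset.sum_congr rfl fun j _ => by by_cases h : i = j <;> simp [hPdef, h] <;> ring
  have hPpsd : P.PosSemidef := by
    refine Matrix.PosSemidef.of_dotProduct_mulVec_nonneg ?_ ?_
    · ext i j
      rw [Matrix.conjTranspose_apply]
      simp only [hPdef, star_trivial]
      rw [hMsym j i]
      by_cases h : i = j <;> simp [h, eq_comm]
    · intro y
      have hy : star y = y := by simp
      rw [hy, form_dotProduct, hPform]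
      have := (abs_le.mp (hM y)).2
      linarith
  have main : ∀ (N' : Matrix (Fin n) (Fin n) ℝ), (∀ i, N' i i = 0) →
      (∀ y : Fin n → ℝ, |∑ i, ∑ j, y i * y j * N' i j| ≤ δ * ∑ i, (y i) ^ 2) →
      0 ≤ δ ^ 2 * ∑ i, (x i) ^ 2 - ∑ i, ∑ j, x i * x j * (M i j * N' i j) := by
    intro N' hN'diag hN'
    set Q : Matrix (Fin n) (Fin n) ℝ := fun i j => (if i = j then δ else 0) + N' i j with hQdef
    have hQform : ∀ y : Fin n → ℝ, 0 ≤ ∑ i, ∑ j, y i * y j * Q i j := by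
      intro y
      have : ∑ i, ∑ j, y i * y j * Q i j
          = δ * ∑ i, (y i) ^ 2 + ∑ i, ∑ j, y i * y j * N' i j := by
        rw [← diag_form δ y, ← Finset.sum_add_distrib]
        refine Finset.sum_congr rfl fun i _ => ?_
        rw [← Finset.sum_add_distrib]
        exact Finset.sum_congr rfl fun j _ => by by_cases h : i = j <;> simp [hQdef, h] <;> ring
      rw [this]
      have := (abs_le.mp (hN' y)).1
      linarith
    have hs := schur_form P Q hPpsd hQform x
    have hPQ : ∀ i j, P i j * Q i j = (if i = j then δ ^ 2 else 0) - M i j * N' i j := by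
      intro i j
      by_cases h : i = j
      · subst h; simp [hPdef, hQdef, hMdiag, hN'diag, sq]
      · simp [hPdef, hQdef, h]
    have : ∑ i, ∑ j, x i * x j * (P i j * Q i j)
        = δ ^ 2 * ∑ i, (x i) ^ 2 - ∑ i, ∑ j, x i * x j * (M i j * N' i j) := by
      rw [← diag_form (δ ^ 2) x, ← Finset.sum_sub_distrib]
      refine Finset.sum_congr rfl fun i _ => ?_
      rw [← Finset.sum_sub_distrib]
      refine Finset.sum_congr rfl fun j _ => by rw [hPQ i j]; ring
    linarith [this ▸ hs]
  have h1 := main N hNdiag hN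
  have h2 := main (fun i j => -N i j) (fun i => by simp [hNdiag i])
    (fun y => by
      have : ∑ i, ∑ j, y i * y j * -N i j = -(∑ i, ∑ j, y i * y j * N i j) := by
        rw [← Finset.sum_neg_distrib]
        refine Finset.sum_congr rfl fun i _ => ?_
        rw [← Finset.sum_neg_distrib]
        exact Finset.sum_congr rfl fun j _ => by ring
      rw [this, abs_neg]; exact hN y)
  rw [abs_le]
  constructor
  · have : ∑ i, ∑ j, x i * x j * (M i j * -N i j)
        = -(∑ i, ∑ j, x i * x j * (M i j * N i j)) := by
      rw [← Finset.sum_neg_distrib]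
      refine Finset.sum_congr rfl fun i _ => ?_
      rw [← Finset.sum_neg_distrib]
      exact Finset.sum_congr rfl fun j _ => by ring
    rw [this] at h2
    linarith
  · linarith

lemma rip_form_bound {m n : ℕ} (Φ : Matrix (Fin m) (Fin n) ℝ) (k : ℕ) (δ δ' : ℝ)
    (hδ' : 0 ≤ δ') (hδδ' : δ ≤ δ')
    (hΦ : SatisfiesRIP Φ k δ) (S : Finset (Fin n)) (hS : S.card ≤ k) (x : Fin n → ℝ) :
    |∑ i, ∑ j, x i * x j *
        (if i ∈ S ∧ j ∈ S then (∑ p, Φ p i * Φ p j) - (if i = j then 1 else 0) else 0)|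
      ≤ δ' * ∑ i, (x i) ^ 2 := by
  set y : Fin n → ℝ := fun i => if i ∈ S then x i else 0 with hy
  have hy_sparse : IsSparse k y := by
    refine le_trans (Finset.card_le_card ?_) hS
    intro i hi
    simp only [Finset.mem_filter, hy] at hi
    by_contra hiS
    exact hi.2 (by simp [hiS])
  have h1 : ∑ i, ∑ j, x i * x j *
        (if i ∈ S ∧ j ∈ S then (∑ p, Φ p i * Φ p j) - (if i = j then 1 else 0) else 0)
      = ∑ i, ∑ j, y i * y j * ((∑ p, Φ p i * Φ p j) - (if i = j then 1 else 0)) := by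
    refine Finset.sum_congr rfl fun i _ => Finset.sum_congr rfl fun j _ => ?_
    by_cases hi : i ∈ S <;> by_cases hj : j ∈ S <;> simp [hy, hi, hj]
  have h2 : ∑ i, ∑ j, y i * y j * ((∑ p, Φ p i * Φ p j) - (if i = j then 1 else 0))
      = (∑ p, (Φ.mulVec y p) ^ 2) - ∑ i, (y i) ^ 2 := by
    rw [sum_mulVec_sq Φ y]
    have : ∑ i, (y i) ^ 2 = ∑ i, ∑ j, y i * y j * (if i = j then (1:ℝ) else 0) := by
      rw [diag_form 1 y, one_mul]
    rw [this, ← Finset.sum_sub_distrib]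
    refine Finset.sum_congr rfl fun i _ => ?_
    rw [← Finset.sum_sub_distrib]
    exact Finset.sum_congr rfl fun j _ => by ring
  have hrip := hΦ y hy_sparse
  have hy_le : ∑ i, (y i) ^ 2 ≤ ∑ i, (x i) ^ 2 := by
    refine Finset.sum_le_sum fun i _ => ?_
    by_cases hi : i ∈ S <;> simp [hy, hi, sq_nonneg]
  have hy_nonneg : 0 ≤ ∑ i, (y i) ^ 2 := Finset.sum_nonneg fun i _ => sq_nonneg _
  rw [h1, h2, abs_le]
  constructor
  · nlinarith [hrip.1]
  · nlinarith [hrip.2]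

/-- Deterministic RIC bound for the Khatri-Rao product: if `A`, `B` have unit-norm
columns and satisfy `k`-RIP with constants `δA, δB ∈ (0,1)`, then `A ⊙ B` satisfies
`k`-RIP with constant at most `δ² = max(δA, δB)²`. -/
theorem ric_bound_khatriRao {m n : ℕ} (A B : Matrix (Fin m) (Fin n) ℝ)
    (k : ℕ) (hk : k ≤ m)
    (hAcol : ∀ j, ∑ i, (A i j) ^ 2 = 1) (hBcol : ∀ j, ∑ i, (B i j) ^ 2 = 1)
    (δA δB : ℝ) (hδA : δA ∈ Set.Ioo (0 : ℝ) 1) (hδB : δB ∈ Set.Ioo (0 : ℝ) 1)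
    (hA : SatisfiesRIP A k δA) (hB : SatisfiesRIP B k δB) :
    SatisfiesRIP (khatriRao A B) k ((max δA δB) ^ 2) := by
  obtain ⟨hA0, _⟩ := hδA
  obtain ⟨hB0, _⟩ := hδB
  set δ : ℝ := max δA δB with hδdef
  have hδ0 : 0 ≤ δ := le_trans hA0.le (le_max_left _ _)
  intro z hz
  set S : Finset (Fin n) := Finset.univ.filter (fun i => z i ≠ 0) with hSdef
  have hS : S.card ≤ k := hz
  have hzS : ∀ i, i ∉ S → z i = 0 := by
    intro i hi
    by_contra h
    exact hi (by simp [hSdef, h])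
  set M : Matrix (Fin n) (Fin n) ℝ := fun i j =>
    if i ∈ S ∧ j ∈ S then (∑ p, A p i * A p j) - (if i = j then 1 else 0) else 0 with hMdef
  set N : Matrix (Fin n) (Fin n) ℝ := fun i j =>
    if i ∈ S ∧ j ∈ S then (∑ p, B p i * B p j) - (if i = j then 1 else 0) else 0 with hNdef
  have hgdiag : ∀ i, ∑ p, A p i * A p i = 1 := by
    intro i; rw [← hAcol i]; exact Finset.sum_congr rfl fun p _ => (sq (A p i)).symm
  have hhdiag : ∀ i, ∑ p, B p i * B p i = 1 := by
    intro i; rw [← hBcol i]; exact Finset.sum_congr rfl fun p _ => (sq (B p i)).symm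
  have hMsym : ∀ i j, M i j = M j i := by
    intro i j
    simp only [hMdef]
    have hg : ∑ p, A p i * A p j = ∑ p, A p j * A p i :=
      Finset.sum_congr rfl fun p _ => mul_comm _ _
    by_cases hij : i = j
    · subst hij; rfl
    · by_cases hi : i ∈ S <;> by_cases hj : j ∈ S <;>
        simp [hi, hj, hij, Ne.symm hij, hg]
  have hMdiag : ∀ i, M i i = 0 := by
    intro i; simp [hMdef, hgdiag i]
  have hNdiag : ∀ i, N i i = 0 := by
    intro i; simp [hNdef, hhdiag i]
  have hMbound := rip_form_bound A k δA δ hδ0 (le_max_left _ _) hA S hS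
  have hNbound := rip_form_bound B k δB δ hδ0 (le_max_right _ _) hB S hS
  have key := hadamard_form_bound M N δ hδ0 hMsym hMdiag hNdiag hMbound hNbound z
  -- Gram factorization of the Khatri-Rao product
  have hKR : ∀ i j, (∑ p : Fin m × Fin m, khatriRao A B p i * khatriRao A B p j)
      = (∑ p, A p i * A p j) * (∑ p, B p i * B p j) := by
    intro i j
    rw [Finset.sum_mul_sum, Fintype.sum_prod_type]
    exact Finset.sum_congr rfl fun a _ => Finset.sum_congr rfl fun b _ => by
      simp [khatriRao]; ring
  have hmain : ∑ p, ((khatriRao A B).mulVec z p) ^ 2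
      = (∑ i, (z i) ^ 2) + ∑ i, ∑ j, z i * z j * (M i j * N i j) := by
    rw [sum_mulVec_sq]
    have hdg : ∑ i, (z i) ^ 2 = ∑ i, ∑ j, z i * z j * (if i = j then (1:ℝ) else 0) := by
      rw [diag_form 1 z, one_mul]
    rw [hdg, ← Finset.sum_add_distrib]
    refine Finset.sum_congr rfl fun i _ => ?_
    rw [← Finset.sum_add_distrib]
    refine Finset.sum_congr rfl fun j _ => ?_
    rw [hKR i j]
    by_cases hi : i ∈ S
    · by_cases hj : j ∈ S
      · by_cases hij : i = j
        · subst hij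
          simp [hMdef, hNdef, hi, hgdiag i, hhdiag i]
        · simp [hMdef, hNdef, hi, hj, hij]
      · rw [hzS j hj]; ring
    · rw [hzS i hi]; ring
  obtain ⟨hkl, hku⟩ := abs_le.mp key
  constructor
  · rw [hmain]; nlinarith
  · rw [hmain]; nlinarith
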